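/- Let n ≥ k ≥ 4 be integers, let G be a graph on n vertices and let u be a vertex of G of degree d_u. Set c_u = k·d_u/n. If c_u ≤ 1 or c_u ≥ 4, then the number of induced k-cycles of G containing u satisfies D_k(G,u) ≤ (128e/81) · (n/k)^{k−1}. -/

import Mathlib

/-- `D_k(G,u)`: the number of vertex subsets `S` of `G` containing `u` such that the induced
subgraph `G[S]` is isomorphic to the `k`-cycle `C_k`. -/
noncomputable def inducedCycleCountAt {V : Type*} [Fintype V] (G : SimpleGraph V) (k : ℕ)
    (u : V) : ℕ :=
  Set.ncard {S : Finset V | u ∈ S ∧ Nonempty (G.induce (S : Set V) ≃g SimpleGraph.cycleGraph k)}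

open Finset
open Fin.NatCast Fin.CommRing



section PathCount
variable {V : Type*} [DecidableEq V]

/-- Finset of induced paths with `t+1` vertices starting at `x`, all later vertices in `A`. -/
def PF (G : SimpleGraph V) [DecidableRel G.Adj] : ℕ → V → Finset V → Finset (List V)
  | 0, x, _ => {[x]}
  | t+1, x, A =>
      (A.filter fun z => G.Adj x z).biUnion fun y =>
        (PF G t y ((A.filter fun z => ¬ G.Adj x z).erase x)).image (List.cons x)

lemma amgm (a b : ℝ) (ha : 0 ≤ a) (hb : 0 ≤ b) (t : ℕ) :
    a * (b / t) ^ t ≤ ((a + b) / (t + 1)) ^ (t + 1) := by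
  rcases Nat.eq_zero_or_pos t with rfl | ht
  · simpa using by linarith
  have htR : (0:ℝ) < t := by exact_mod_cast ht
  have ht1 : (0:ℝ) < (t:ℝ) + 1 := by linarith
  have hw : (1:ℝ) / (t + 1) + (t:ℝ) / (t + 1) = 1 := by field_simp; ring
  have hgm := Real.geom_mean_le_arith_mean2_weighted
    (w₁ := 1 / ((t:ℝ) + 1)) (w₂ := (t:ℝ) / ((t:ℝ) + 1))
    (p₁ := ((t:ℝ) + 1) * a) (p₂ := ((t:ℝ) + 1) * b / t)
    (by positivity) (by positivity) (by positivity) (by positivity) (by rw [hw])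
  have hsum : 1 / ((t:ℝ)+1) * (((t:ℝ)+1) * a) + (t:ℝ)/((t:ℝ)+1) * (((t:ℝ)+1) * b / t) = a + b := by
    field_simp
  rw [hsum] at hgm
  have hpow := Real.rpow_le_rpow (by positivity) hgm (le_of_lt ht1)
  rw [Real.mul_rpow (by positivity) (by positivity),
    ← Real.rpow_mul (by positivity), ← Real.rpow_mul (by positivity)] at hpow
  have e₁ : 1 / ((t:ℝ)+1) * ((t:ℝ) + 1) = 1 := by field_simp
  have e₂ : (t:ℝ)/((t:ℝ)+1) * ((t:ℝ) + 1) = t := by field_simp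
  rw [e₁, e₂, Real.rpow_one, Real.rpow_natCast] at hpow
  have hL : (((t:ℝ)+1) * a) * ((((t:ℝ)+1) * b / t)) ^ (t:ℕ) = ((t:ℝ)+1)^(t+1) * (a * (b/t)^t) := by
    rw [show ((t:ℝ)+1) * b / t = ((t:ℝ)+1) * (b / t) by ring, mul_pow, pow_succ]
    ring
  rw [hL] at hpow
  have hR : ((a+b) : ℝ) ^ (((t:ℝ)+1)) = (a+b)^(t+1) := by
    rw [show ((t:ℝ)+1) = ((t+1 : ℕ) : ℝ) by push_cast; ring, Real.rpow_natCast]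
  rw [hR] at hpow
  have hdp : ((a+b)/((t:ℝ)+1))^(t+1) = (a+b)^(t+1) / ((t:ℝ)+1)^(t+1) := div_pow _ _ _
  rw [hdp, le_div_iff₀ (by positivity)]
  linear_combination hpow


lemma PF_card_le (G : SimpleGraph V) [DecidableRel G.Adj] :
    ∀ (t : ℕ) (x : V) (A : Finset V),
      ((PF G t x A).card : ℝ) ≤ ((A.card : ℝ) / t) ^ t := by
  intro t
  induction t with
  | zero => intro x A; simp [PF]
  | succ t ih =>
    intro x A
    have hFA : (A.filter fun z => G.Adj x z).card ≤ A.card := card_filter_le _ _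
    have hA' : ((A.filter fun z => ¬ G.Adj x z).erase x).card ≤
        A.card - (A.filter fun z => G.Adj x z).card := by
      calc ((A.filter fun z => ¬ G.Adj x z).erase x).card
          ≤ (A.filter fun z => ¬ G.Adj x z).card := card_erase_le
        _ = A.card - (A.filter fun z => G.Adj x z).card := by
            have := card_filter_add_card_filter_not (s := A)
              (p := fun z => G.Adj x z)
            omega
    have hstep : ((PF G (t+1) x A).card : ℝ) ≤
        ∑ y ∈ A.filter (fun z => G.Adj x z),
          ((PF G t y ((A.filter fun z => ¬ G.Adj x z).erase x)).card : ℝ) := by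
      rw [show PF G (t+1) x A = (A.filter fun z => G.Adj x z).biUnion (fun y =>
        (PF G t y ((A.filter fun z => ¬ G.Adj x z).erase x)).image (List.cons x)) from rfl]
      calc (((A.filter fun z => G.Adj x z).biUnion _).card : ℝ)
          ≤ ((∑ y ∈ A.filter (fun z => G.Adj x z),
              ((PF G t y ((A.filter fun z => ¬ G.Adj x z).erase x)).image (List.cons x)).card : ℕ) : ℝ) := by
            exact_mod_cast Nat.cast_le.mpr card_biUnion_le
        _ ≤ _ := by
            push_cast
            apply Finset.sum_le_sum
            intro y _
            exact_mod_cast card_image_le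
    have hnum : ((((A.card - (A.filter fun z => G.Adj x z).card : ℕ)) : ℝ)) =
        (A.card : ℝ) - ((A.filter fun z => G.Adj x z).card : ℝ) :=
      Nat.cast_sub hFA
    have hbd : ∀ y ∈ A.filter (fun z => G.Adj x z),
        ((PF G t y ((A.filter fun z => ¬ G.Adj x z).erase x)).card : ℝ) ≤
          (((A.card : ℝ) - ((A.filter fun z => G.Adj x z).card : ℝ)) / t) ^ t := by
      intro y _
      refine le_trans (ih y _) ?_
      rw [← hnum]
      rcases Nat.eq_zero_or_pos t with rfl | htpos
      · simp
      · apply pow_le_pow_left₀ (by positivity)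
        gcongr
    calc ((PF G (t+1) x A).card : ℝ)
        ≤ ∑ y ∈ A.filter (fun z => G.Adj x z),
            ((PF G t y ((A.filter fun z => ¬ G.Adj x z).erase x)).card : ℝ) := hstep
      _ ≤ ∑ _y ∈ A.filter (fun z => G.Adj x z),
            (((A.card : ℝ) - ((A.filter fun z => G.Adj x z).card : ℝ)) / t) ^ t :=
          Finset.sum_le_sum hbd
      _ = ((A.filter fun z => G.Adj x z).card : ℝ) *
            (((A.card : ℝ) - ((A.filter fun z => G.Adj x z).card : ℝ)) / t) ^ t := by
          rw [Finset.sum_const, nsmul_eq_mul]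
      _ ≤ ((A.card : ℝ) / (t+1)) ^ (t+1) := by
          have h := amgm ((A.filter fun z => G.Adj x z).card : ℝ)
            ((A.card : ℝ) - ((A.filter fun z => G.Adj x z).card : ℝ))
            (by positivity) (by rw [← hnum]; positivity) t
          have he : ((A.filter fun z => G.Adj x z).card : ℝ) +
              ((A.card : ℝ) - ((A.filter fun z => G.Adj x z).card : ℝ)) = (A.card : ℝ) := by ring
          rw [he] at h
          exact h
      _ = ((A.card : ℝ) / ((t+1 : ℕ) : ℝ)) ^ (t+1) := by push_cast; ring


lemma mem_PF (G : SimpleGraph V) [DecidableRel G.Adj] :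
    ∀ (t : ℕ) (f : ℕ → V) (A : Finset V),
      (∀ i, i < t → G.Adj (f i) (f (i+1))) →
      (∀ i j, i + 2 ≤ j → j ≤ t → ¬ G.Adj (f i) (f j) ∧ f i ≠ f j) →
      (∀ i, 1 ≤ i → i ≤ t → f i ∈ A) →
      (List.range (t+1)).map f ∈ PF G t (f 0) A := by
  intro t
  induction t with
  | zero => intro f A _ _ _; simp [PF, List.range_succ]
  | succ t ih =>
    intro f A hadj hind hA
    have hlist : (List.range (t+2)).map f
        = f 0 :: (List.range (t+1)).map (fun i => f (i+1)) := by
      rw [List.range_succ_eq_map, List.map_cons, List.map_map]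
      rfl
    rw [hlist, show PF G (t+1) (f 0) A = (A.filter fun z => G.Adj (f 0) z).biUnion (fun y =>
      (PF G t y ((A.filter fun z => ¬ G.Adj (f 0) z).erase (f 0))).image (List.cons (f 0))) from rfl]
    rw [Finset.mem_biUnion]
    refine ⟨f 1, ?_, ?_⟩
    · rw [Finset.mem_filter]
      exact ⟨hA 1 le_rfl (by omega), hadj 0 (by omega)⟩
    · rw [Finset.mem_image]
      refine ⟨(List.range (t+1)).map (fun i => f (i+1)), ?_, rfl⟩
      have := ih (fun i => f (i+1)) ((A.filter fun z => ¬ G.Adj (f 0) z).erase (f 0))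
        (fun i hi => hadj (i+1) (by omega))
        (fun i j hij hj => hind (i+1) (j+1) (by omega) (by omega))
        ?_
      · exact this
      · intro i hi1 hit
        rw [Finset.mem_erase, Finset.mem_filter]
        have h1 := hind 0 (i+1) (by omega) (by omega)
        exact ⟨fun h => h1.2 h.symm, hA (i+1) (by omega) (by omega), h1.1⟩


end PathCount


lemma fin_cast_eq (k : ℕ) [NeZero k] (a b : ℕ) :
    ((a : Fin k) = (b : Fin k)) ↔ a % k = b % k := by
  rw [Fin.ext_iff, Fin.val_natCast, Fin.val_natCast]

lemma cyc_adj (k : ℕ) [NeZero k] (hk : 4 ≤ k) (e r : Fin k) (he : e = 1 ∨ e = -1) (a c : ℕ)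
    (ha : a < k) (hc : c < k) :
    (SimpleGraph.cycleGraph k).Adj (r + e * a) (r + e * c) ↔
      ((a+1) % k = c ∨ (c+1) % k = a) := by
  have hone : ((1 : Fin k)).val = 1 := by
    rcases k with _ | _ | k
    · omega
    · omega
    · exact Fin.val_one _
  have hsub : ∀ x y : Fin k, ((x - y : Fin k)).val = 1 ↔ x = y + 1 := by
    intro x y
    rw [show (1:ℕ) = ((1:Fin k)).val from hone.symm, ← Fin.ext_iff, sub_eq_iff_eq_add,
      add_comm]
  rw [SimpleGraph.cycleGraph_adj', hsub, hsub]
  have key : ∀ x y : Fin k, (r + e*x = r + e*y + 1) ↔ x = y + e := by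
    intro x y
    rcases he with rfl | rfl
    · constructor <;> intro h <;> linear_combination h
    · constructor <;> intro h <;> linear_combination -h
  rw [key, key]
  have swap : ((a : Fin k) = c + e ∨ (c : Fin k) = a + e) ↔
      ((a : Fin k) = (c : Fin k) + 1 ∨ (c : Fin k) = (a : Fin k) + 1) := by
    rcases he with rfl | rfl
    · tauto
    · constructor
      · rintro (h | h)
        · exact Or.inr (by linear_combination -h)
        · exact Or.inl (by linear_combination -h)
      · rintro (h | h)
        · exact Or.inr (by linear_combination -h)
        · exact Or.inl (by linear_combination -h)
  rw [swap]
  have conv1 : ((a : Fin k) = (c : Fin k) + 1) ↔ ((c+1) % k = a) := by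
    rw [show ((c : Fin k) + 1) = (((c+1 : ℕ)) : Fin k) by push_cast; ring, fin_cast_eq,
      Nat.mod_eq_of_lt ha]
    exact eq_comm
  have conv2 : ((c : Fin k) = (a : Fin k) + 1) ↔ ((a+1) % k = c) := by
    rw [show ((a : Fin k) + 1) = (((a+1 : ℕ)) : Fin k) by push_cast; ring, fin_cast_eq,
      Nat.mod_eq_of_lt hc]
    exact eq_comm
  rw [conv1, conv2]
  tauto


variable {n k : ℕ} [NeZero k] {G : SimpleGraph (Fin n)} {u : Fin n} {S : Finset (Fin n)}

noncomputable def wm (G : SimpleGraph (Fin n)) (u : Fin n) (S : Finset (Fin n))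
    (h : u ∈ S ∧ Nonempty (G.induce (S : Set (Fin n)) ≃g SimpleGraph.cycleGraph k))
    (b : Bool) (j : ℕ) : Fin n :=
  (h.2.some.symm (h.2.some ⟨u, by exact_mod_cast h.1⟩
    + (if b then (1 : Fin k) else -1) * (j : Fin k))).1

section wmfacts
variable (h : u ∈ S ∧ Nonempty (G.induce (S : Set (Fin n)) ≃g SimpleGraph.cycleGraph k)) (b : Bool)

lemma e_sq : (if b then (1 : Fin k) else -1) * (if b then (1 : Fin k) else -1) = 1 := by
  cases b <;> simp

lemma wm_mem (j : ℕ) : wm G u S h b j ∈ S := by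
  rw [wm]; exact Finset.mem_coe.mp (Subtype.coe_prop _)

lemma wm_zero : wm G u S h b 0 = u := by
  simp [wm]

lemma wm_inj {a c : ℕ} (ha : a < k) (hc : c < k) :
    wm G u S h b a = wm G u S h b c ↔ a = c := by
  rw [wm, wm, Subtype.val_inj, (EquivLike.apply_eq_iff_eq h.2.some.symm), add_right_inj]
  constructor
  · intro hec
    have := congrArg ((if b then (1 : Fin k) else -1) * ·) hec
    simp only [← mul_assoc, e_sq, one_mul] at this
    rwa [fin_cast_eq, Nat.mod_eq_of_lt ha, Nat.mod_eq_of_lt hc] at this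
  · rintro rfl; rfl

lemma wm_adj (hk : 4 ≤ k) {a c : ℕ} (ha : a < k) (hc : c < k) :
    G.Adj (wm G u S h b a) (wm G u S h b c) ↔ ((a+1) % k = c ∨ (c+1) % k = a) := by
  rw [wm, wm]
  have hmain := (SimpleGraph.Iso.map_adj_iff h.2.some.symm
      (v := h.2.some ⟨u, by exact_mod_cast h.1⟩ + (if b then (1 : Fin k) else -1) * (a : Fin k))
      (w := h.2.some ⟨u, by exact_mod_cast h.1⟩ + (if b then (1 : Fin k) else -1) * (c : Fin k))).trans
    (cyc_adj k hk _ _ (by cases b <;> simp) a c ha hc)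
  exact hmain

lemma wm_surj {s : Fin n} (hs : s ∈ S) : ∃ a, a < k ∧ wm G u S h b a = s := by
  refine ⟨((if b then (1 : Fin k) else -1) * (h.2.some ⟨s, by exact_mod_cast hs⟩
      - h.2.some ⟨u, by exact_mod_cast h.1⟩)).val,
    Fin.is_lt _, ?_⟩
  rw [wm, Fin.cast_val_eq_self, ← mul_assoc, e_sq, one_mul, add_sub_cancel]
  have := h.2.some.toEquiv.symm_apply_apply ⟨s, by exact_mod_cast hs⟩
  exact congrArg Subtype.val this


section CYC2
variable {n k : ℕ} [NeZero k] {G : SimpleGraph (Fin n)} {u : Fin n} {S : Finset (Fin n)}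
variable (h : u ∈ S ∧ Nonempty (G.induce (S : Set (Fin n)) ≃g SimpleGraph.cycleGraph k)) (b : Bool)


lemma head_ne (hk : 4 ≤ k) : wm G u S h true 1 ≠ wm G u S h false 1 := by
  intro heq
  rw [wm, wm, Subtype.val_inj, EquivLike.apply_eq_iff_eq, add_right_inj] at heq
  simp only [Bool.false_eq_true, reduceIte, if_false, ite_false] at heq
  have h2 : ((2:ℕ) : Fin k) = ((0:ℕ) : Fin k) := by push_cast; linear_combination heq
  rw [fin_cast_eq, Nat.mod_eq_of_lt (by omega), Nat.zero_mod] at h2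
  omega

lemma recov (hk : 4 ≤ k) :
    S = insert u (insert (wm G u S h b (k-1))
      ((List.range (k-2)).map (fun i => wm G u S h b (i+1))).toFinset) := by
  apply Finset.Subset.antisymm
  · intro s hs
    obtain ⟨a, hak, rfl⟩ := wm_surj h b hs
    rcases Nat.eq_zero_or_pos a with rfl | ha0
    · rw [wm_zero]; exact Finset.mem_insert_self _ _
    rcases eq_or_ne a (k-1) with rfl | hak1
    · exact Finset.mem_insert_of_mem (Finset.mem_insert_self _ _)
    · refine Finset.mem_insert_of_mem (Finset.mem_insert_of_mem ?_)
      rw [List.mem_toFinset, List.mem_map]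
      exact ⟨a - 1, List.mem_range.mpr (by omega), by rw [Nat.sub_add_cancel ha0]⟩
  · intro s hs
    rcases Finset.mem_insert.mp hs with rfl | hs'
    · exact h.1
    rcases Finset.mem_insert.mp hs' with rfl | hs''
    · exact wm_mem h b _
    · rw [List.mem_toFinset, List.mem_map] at hs''
      obtain ⟨i, _, rfl⟩ := hs''
      exact wm_mem h b _


end CYC2


lemma count_le (n k : ℕ) (hk : 4 ≤ k) (G : SimpleGraph (Fin n)) [DecidableRel G.Adj]
    (u : Fin n) :
    2 * (inducedCycleCountAt G k u : ℝ) ≤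
      (G.degree u : ℝ)^2 *
        (((n - 1 - G.degree u : ℕ) : ℝ) / ((k - 3 : ℕ) : ℝ)) ^ (k-3) := by
  classical
  haveI : NeZero k := ⟨by omega⟩
  have hfin : {S : Finset (Fin n) | u ∈ S ∧
      Nonempty (G.induce (S : Set (Fin n)) ≃g SimpleGraph.cycleGraph k)}.Finite :=
    Set.toFinite _
  set A₁ : Finset (Fin n) := (insert u (G.neighborFinset u))ᶜ with hA₁def
  set T : Finset (Fin n × List (Fin n)) :=
    (G.neighborFinset u) ×ˢ ((G.neighborFinset u).biUnion fun y => PF G (k-3) y A₁) with hT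
  have hnat : 2 * inducedCycleCountAt G k u ≤ T.card := by
    have hcard : inducedCycleCountAt G k u = hfin.toFinset.card :=
      Set.ncard_eq_toFinset_card _ hfin
    rw [hcard, show 2 * hfin.toFinset.card
        = (hfin.toFinset ×ˢ (Finset.univ : Finset Bool)).card by
      rw [Finset.card_product]; simp [mul_comm]]
    apply Finset.card_le_card_of_injOn
      (fun p => if hS : u ∈ p.1 ∧
          Nonempty (G.induce (p.1 : Set (Fin n)) ≃g SimpleGraph.cycleGraph k) then
          (wm G u p.1 hS p.2 (k-1), (List.range (k-2)).map (fun i => wm G u p.1 hS p.2 (i+1)))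
        else (u, []))
    · -- membership
      rintro ⟨S, b⟩ hp
      have hS : u ∈ S ∧ Nonempty (G.induce (S : Set (Fin n)) ≃g SimpleGraph.cycleGraph k) := by
        have := (Finset.mem_product.mp hp).1
        rwa [Set.Finite.mem_toFinset] at this
      simp only [dif_pos hS]
      rw [Finset.mem_coe, Finset.mem_product]
      constructor
      · have hadj : G.Adj (wm G u S hS b 0) (wm G u S hS b (k-1)) := by
          rw [wm_adj hS b hk (by omega) (by omega)]
          right; rw [Nat.sub_add_cancel (by omega), Nat.mod_self]
        rw [wm_zero hS b] at hadj
        exact (G.mem_neighborFinset u _).mpr hadj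
      · rw [Finset.mem_biUnion]
        refine ⟨wm G u S hS b 1, ?_, ?_⟩
        · have hadj : G.Adj (wm G u S hS b 0) (wm G u S hS b 1) := by
            rw [wm_adj hS b hk (by omega) (by omega)]
            exact Or.inl (Nat.mod_eq_of_lt (by omega))
          rw [wm_zero hS b] at hadj
          exact (G.mem_neighborFinset u _).mpr hadj
        · have hmem := mem_PF G (k-3) (fun i => wm G u S hS b (i+1)) A₁ ?_ ?_ ?_
          · rw [show k - 2 = (k-3)+1 by omega]
            exact hmem
          · intro i hi
            rw [wm_adj hS b hk (by omega) (by omega)]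
            exact Or.inl (Nat.mod_eq_of_lt (by omega))
          · intro i j hij hj
            constructor
            · rw [wm_adj hS b hk (by omega) (by omega)]
              rintro (hcon | hcon) <;> rw [Nat.mod_eq_of_lt (by omega)] at hcon <;> omega
            · intro hcon
              rw [wm_inj hS b (by omega) (by omega)] at hcon
              omega
          · intro i hi1 hik
            rw [hA₁def, Finset.mem_compl, Finset.mem_insert]
            push_neg
            constructor
            · intro hcon
              have hcon' : wm G u S hS b (i+1) = wm G u S hS b 0 := by
                rw [wm_zero hS b]; exact hcon
              have := (wm_inj hS b (by omega : i+1 < k) (by omega : 0 < k)).mp hcon'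
              omega
            · rw [G.mem_neighborFinset]
              intro hcon
              have hcon' : G.Adj (wm G u S hS b 0) (wm G u S hS b (i+1)) := by
                rw [wm_zero hS b]; exact hcon
              rw [wm_adj hS b hk (by omega) (by omega)] at hcon'
              rcases hcon' with hcon' | hcon' <;>
                rw [Nat.mod_eq_of_lt (by omega)] at hcon' <;> omega
    · -- injectivity
      rintro ⟨S, b⟩ hp ⟨S', b'⟩ hq heq
      simp only [Finset.coe_product, Set.mem_prod, Finset.mem_coe,
        Set.Finite.mem_toFinset] at hp hq
      have hS : u ∈ S ∧ Nonempty (G.induce (S : Set (Fin n)) ≃g SimpleGraph.cycleGraph k) := hp.1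
      have hS' : u ∈ S' ∧ Nonempty (G.induce (S' : Set (Fin n)) ≃g SimpleGraph.cycleGraph k) := hq.1
      simp only [dif_pos hS, dif_pos hS', Prod.mk.injEq] at heq
      have hSeq : S = S' := by
        rw [recov hS b hk, recov hS' b' hk, heq.1, heq.2]
      subst hSeq
      have hbeq : b = b' := by
        by_contra hbb
        have hhead : wm G u S hS b 1 = wm G u S hS' b' 1 := by
          have h2 := heq.2
          have hget := congrArg (fun l => l.getD 0 u) h2
          rw [show k - 2 = (k-3)+1 by omega] at hget
          simpa [List.range_succ_eq_map] using hget
        have hSS : hS = hS' := rfl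
        rw [← hSS] at hhead
        rcases Bool.eq_false_or_eq_true b with rfl | rfl
        · rcases Bool.eq_false_or_eq_true b' with rfl | rfl
          · exact hbb rfl
          · exact head_ne hS hk hhead
        · rcases Bool.eq_false_or_eq_true b' with rfl | rfl
          · exact head_ne hS hk hhead.symm
          · exact hbb rfl
      rw [hbeq]
  -- numeric part
  have hA₁card : A₁.card = n - 1 - G.degree u := by
    rw [hA₁def, Finset.card_compl, Finset.card_insert_of_notMem
      (SimpleGraph.notMem_neighborFinset_self G u), Fintype.card_fin,
      SimpleGraph.card_neighborFinset_eq_degree]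
    omega
  have hTcard : (T.card : ℝ) ≤ (G.degree u : ℝ)^2 *
      (((n - 1 - G.degree u : ℕ) : ℝ) / ((k - 3 : ℕ) : ℝ)) ^ (k-3) := by
    rw [hT, Finset.card_product]
    push_cast
    rw [SimpleGraph.card_neighborFinset_eq_degree]
    have hb : (((G.neighborFinset u).biUnion fun y => PF G (k-3) y A₁).card : ℝ) ≤
        (G.degree u : ℝ) * (((n - 1 - G.degree u : ℕ) : ℝ) / ((k - 3 : ℕ) : ℝ)) ^ (k-3) := by
      calc (((G.neighborFinset u).biUnion fun y => PF G (k-3) y A₁).card : ℝ)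
          ≤ ((∑ y ∈ G.neighborFinset u, (PF G (k-3) y A₁).card : ℕ) : ℝ) := by
            exact_mod_cast Finset.card_biUnion_le
        _ ≤ ∑ y ∈ G.neighborFinset u,
              (((n - 1 - G.degree u : ℕ) : ℝ) / ((k - 3 : ℕ) : ℝ)) ^ (k-3) := by
            push_cast
            apply Finset.sum_le_sum
            intro y _
            have := PF_card_le G (k-3) y A₁
            rwa [hA₁card] at this
            
        _ = (G.degree u : ℝ) * (((n - 1 - G.degree u : ℕ) : ℝ) / ((k - 3 : ℕ) : ℝ)) ^ (k-3) := by
            rw [Finset.sum_const, nsmul_eq_mul, SimpleGraph.card_neighborFinset_eq_degree]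
    calc (G.degree u : ℝ) * (((G.neighborFinset u).biUnion fun y => PF G (k-3) y A₁).card : ℝ)
        ≤ (G.degree u : ℝ) * ((G.degree u : ℝ) *
            (((n - 1 - G.degree u : ℕ) : ℝ) / ((k - 3 : ℕ) : ℝ)) ^ (k-3)) := by
          apply mul_le_mul_of_nonneg_left hb (by positivity)
      _ = (G.degree u : ℝ)^2 *
            (((n - 1 - G.degree u : ℕ) : ℝ) / ((k - 3 : ℕ) : ℝ)) ^ (k-3) := by ring
  calc 2 * (inducedCycleCountAt G k u : ℝ) ≤ (T.card : ℝ) := by exact_mod_cast hnat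
    _ ≤ _ := hTcard


lemma hasDeriv_f (N : ℝ) (m : ℕ) (x : ℝ) :
    HasDerivAt (fun y : ℝ => y^2 * (N - y)^m)
      (2*x*(N-x)^m - m*x^2*(N-x)^(m-1)) x := by
  have h1 : HasDerivAt (fun y : ℝ => y^2) (2*x) x := by
    simpa using hasDerivAt_pow 2 x
  have h2 : HasDerivAt (fun y : ℝ => (N - y)^m) (-(m*(N-x)^(m-1))) x := by
    have := (((hasDerivAt_id x).const_sub N).fun_pow m)
    simpa using this
  have := h1.fun_mul h2
  rw [show (2*x*(N-x)^m - m*x^2*(N-x)^(m-1)) =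
    2 * x * (N - x) ^ m + x ^ 2 * -((m:ℝ) * (N - x) ^ (m - 1)) by ring]
  exact this

lemma anti_aux (N : ℝ) (m : ℕ) (hm : 1 ≤ m) (a b : ℝ) (ha : 0 ≤ a) (hab : a ≤ b) (hbN : b ≤ N)
    (h : 2 * (N - a) ≤ m * a) : b^2 * (N - b)^m ≤ a^2 * (N - a)^m := by
  have H : AntitoneOn (fun y : ℝ => y^2 * (N - y)^m) (Set.Icc a b) := by
    apply antitoneOn_of_deriv_nonpos (convex_Icc a b)
    · exact (((continuous_id.pow 2).mul ((continuous_const.sub continuous_id).pow m))).continuousOn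
    · intro x hx
      exact (hasDeriv_f N m x).differentiableAt.differentiableWithinAt
    · intro x hx
      rw [interior_Icc] at hx
      rw [(hasDeriv_f N m x).deriv]
      obtain ⟨j, rfl⟩ : ∃ j, m = j + 1 := ⟨m - 1, by omega⟩
      have hx0 : 0 ≤ x := le_trans ha hx.1.le
      have hNx : 0 ≤ N - x := by
        have := hx.2
        nlinarith
      have hNj : 0 ≤ (N - x)^j := pow_nonneg hNx j
      have hkey : 2 * (N - x) ≤ ((j:ℝ)+1) * x := by
        push_cast at h
        nlinarith [mul_nonneg (by positivity : (0:ℝ) ≤ (j:ℝ)+1)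
          (by linarith [hx.1] : (0:ℝ) ≤ x - a)]
      have hms : (N - x)^(j+1) = (N - x)^j * (N - x) := pow_succ _ _
      rw [hms]
      have hfact : 0 ≤ x * (N-x)^j * ((j+1) * x - 2 * (N - x)) :=
        mul_nonneg (mul_nonneg hx0 hNj) (by linarith)
      push_cast
      nlinarith [hfact]
  have hmem1 : a ∈ Set.Icc a b := Set.left_mem_Icc.mpr hab
  have hmem2 : b ∈ Set.Icc a b := Set.right_mem_Icc.mpr hab
  exact H hmem1 hmem2 hab

lemma mono_aux (N : ℝ) (m : ℕ) (hm : 1 ≤ m) (a b : ℝ) (ha : 0 ≤ a) (hab : a ≤ b) (hbN : b ≤ N)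
    (h : m * b ≤ 2 * (N - b)) : a^2 * (N - a)^m ≤ b^2 * (N - b)^m := by
  have H : MonotoneOn (fun y : ℝ => y^2 * (N - y)^m) (Set.Icc a b) := by
    apply monotoneOn_of_deriv_nonneg (convex_Icc a b)
    · exact (((continuous_id.pow 2).mul ((continuous_const.sub continuous_id).pow m))).continuousOn
    · intro x hx
      exact (hasDeriv_f N m x).differentiableAt.differentiableWithinAt
    · intro x hx
      rw [interior_Icc] at hx
      rw [(hasDeriv_f N m x).deriv]
      obtain ⟨j, rfl⟩ : ∃ j, m = j + 1 := ⟨m - 1, by omega⟩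
      have hx0 : 0 ≤ x := le_trans ha hx.1.le
      have hNx : 0 ≤ N - x := by nlinarith [hx.2, hbN]
      have hNj : 0 ≤ (N - x)^j := pow_nonneg hNx j
      have hkey : ((j:ℝ)+1) * x ≤ 2 * (N - x) := by
        push_cast at h
        nlinarith [mul_nonneg (by positivity : (0:ℝ) ≤ (j:ℝ)+1)
          (by linarith [hx.2] : (0:ℝ) ≤ b - x)]
      have hms : (N - x)^(j+1) = (N - x)^j * (N - x) := pow_succ _ _
      rw [hms]
      have hfact : 0 ≤ x * (N-x)^j * (2 * (N - x) - (j+1) * x) :=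
        mul_nonneg (mul_nonneg hx0 hNj) (by linarith)
      push_cast
      nlinarith [hfact]
  exact H (Set.left_mem_Icc.mpr hab) (Set.right_mem_Icc.mpr hab) hab


set_option maxHeartbeats 1600000 in
lemma num_final (n k : ℕ) (hk : 4 ≤ k) (hkn : k ≤ n) (d : ℝ) (hd0 : 0 ≤ d)
    (hdn : d ≤ (n:ℝ) - 1)
    (hc : (k:ℝ) * d / n ≤ 1 ∨ 4 ≤ (k:ℝ) * d / n) :
    d^2 * (((n:ℝ) - 1 - d) / ((k:ℝ) - 3))^(k-3)
      ≤ 2 * (128 * Real.exp 1 / 81) * ((n:ℝ)/(k:ℝ))^(k-1) := by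
  have hK4 : (4:ℝ) ≤ (k:ℝ) := by exact_mod_cast hk
  have hNK : (k:ℝ) ≤ (n:ℝ) := by exact_mod_cast hkn
  have hK0 : (0:ℝ) < k := by linarith
  have hN0 : (0:ℝ) < n := by linarith
  have hK3 : (0:ℝ) < (k:ℝ) - 3 := by linarith
  have hm : 1 ≤ k - 3 := by omega
  have hmcast : ((k - 3 : ℕ) : ℝ) = (k:ℝ) - 3 := by
    push_cast [Nat.cast_sub (by omega : 3 ≤ k)]; ring
  have hexp : k - 1 = (k - 3) + 2 := by omega
  have hNKpow : (0:ℝ) ≤ ((n:ℝ)/(k:ℝ))^(k-1) := by positivity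
  -- step 1 : replace N-1-d by N-d
  have step1 : d^2 * (((n:ℝ) - 1 - d) / ((k:ℝ) - 3))^(k-3)
      ≤ d^2 * (((n:ℝ) - d) / ((k:ℝ) - 3))^(k-3) := by
    apply mul_le_mul_of_nonneg_left _ (by positivity)
    apply pow_le_pow_left₀ (by apply div_nonneg <;> linarith)
    apply div_le_div_of_nonneg_right (by linarith) hK3.le
  rcases hc with hc | hc
  · -- low degree
    have hdNK : d ≤ (n:ℝ)/(k:ℝ) := by
      rw [le_div_iff₀ hK0]
      rw [div_le_one hN0] at hc
      linarith
    have hq : ((n:ℝ)/(k:ℝ)) * (k:ℝ) = (n:ℝ) := div_mul_cancel₀ _ (ne_of_gt hK0)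
    have hq0 : (0:ℝ) ≤ (n:ℝ)/(k:ℝ) := by positivity
    have hmono := mono_aux (n:ℝ) (k-3) hm d ((n:ℝ)/(k:ℝ)) hd0 hdNK
      (by nlinarith [mul_nonneg hq0 (by linarith : (0:ℝ) ≤ (k:ℝ)-1)])
      (by rw [hmcast]; nlinarith)
    have heq1 : ((n:ℝ)/(k:ℝ))^2 * ((n:ℝ) - (n:ℝ)/(k:ℝ))^(k-3) / ((k:ℝ)-3)^(k-3)
        = ((n:ℝ)/(k:ℝ))^(k-1) * (((k:ℝ)-1)/((k:ℝ)-3))^(k-3) := by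
      rw [hexp, pow_add]
      rw [show (n:ℝ) - (n:ℝ)/(k:ℝ) = ((n:ℝ)/(k:ℝ)) * ((k:ℝ)-1) by field_simp]
      rw [mul_pow, div_pow ((k:ℝ)-1)]
      field_simp
    have hexp2 : (((k:ℝ)-1)/((k:ℝ)-3))^(k-3) ≤ Real.exp 2 := by
      have hbase : ((k:ℝ)-1)/((k:ℝ)-3) = 1 + 2/((k:ℝ)-3) := by field_simp; ring
      have h1 : ((k:ℝ)-1)/((k:ℝ)-3) ≤ Real.exp (2/((k:ℝ)-3)) := by
        rw [hbase]
        have := Real.add_one_le_exp (2/((k:ℝ)-3))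
        linarith
      calc (((k:ℝ)-1)/((k:ℝ)-3))^(k-3) ≤ (Real.exp (2/((k:ℝ)-3)))^(k-3) :=
            pow_le_pow_left₀ (by apply div_nonneg <;> linarith) h1 _
        _ = Real.exp (((k-3:ℕ):ℝ) * (2/((k:ℝ)-3))) := (Real.exp_nat_mul _ _).symm
        _ = Real.exp 2 := by
            rw [hmcast]
            congr 1
            field_simp
    have hfinal : Real.exp 2 ≤ 2 * (128 * Real.exp 1 / 81) := by
      rw [show (2:ℝ) = 1 + 1 by norm_num, Real.exp_add]
      nlinarith [Real.exp_one_lt_d9, Real.exp_pos 1]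
    calc d^2 * (((n:ℝ) - 1 - d) / ((k:ℝ) - 3))^(k-3)
        ≤ d^2 * (((n:ℝ) - d) / ((k:ℝ) - 3))^(k-3) := step1
      _ = d^2 * ((n:ℝ) - d)^(k-3) / ((k:ℝ)-3)^(k-3) := by
          rw [div_pow]; ring
      _ ≤ ((n:ℝ)/(k:ℝ))^2 * ((n:ℝ) - (n:ℝ)/(k:ℝ))^(k-3) / ((k:ℝ)-3)^(k-3) :=
          div_le_div_of_nonneg_right hmono (by positivity)
      _ = ((n:ℝ)/(k:ℝ))^(k-1) * (((k:ℝ)-1)/((k:ℝ)-3))^(k-3) := heq1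
      _ ≤ ((n:ℝ)/(k:ℝ))^(k-1) * Real.exp 2 := by
          apply mul_le_mul_of_nonneg_left hexp2 hNKpow
      _ ≤ ((n:ℝ)/(k:ℝ))^(k-1) * (2 * (128 * Real.exp 1 / 81)) := by
          apply mul_le_mul_of_nonneg_left hfinal hNKpow
      _ = 2 * (128 * Real.exp 1 / 81) * ((n:ℝ)/(k:ℝ))^(k-1) := by ring
  · -- high degree
    have hk5 : 5 ≤ k := by
      by_contra hcon
      have hk4 : k = 4 := by omega
      subst hk4
      rw [show ((4:ℕ):ℝ) = (4:ℝ) by norm_num] at hc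
      rw [le_div_iff₀ hN0] at hc
      nlinarith
    have hK5 : (5:ℝ) ≤ (k:ℝ) := by exact_mod_cast hk5
    have hdlow : 4*(n:ℝ)/(k:ℝ) ≤ d := by
      rw [div_le_iff₀ hK0]
      rw [le_div_iff₀ hN0] at hc
      nlinarith
    have hq : ((n:ℝ)/(k:ℝ)) * (k:ℝ) = (n:ℝ) := div_mul_cancel₀ _ (ne_of_gt hK0)
    have hq0 : (0:ℝ) ≤ (n:ℝ)/(k:ℝ) := by positivity
    have h4q : 4*(n:ℝ)/(k:ℝ) = 4*((n:ℝ)/(k:ℝ)) := by ring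
    have hanti := anti_aux (n:ℝ) (k-3) hm (4*(n:ℝ)/(k:ℝ)) d (by positivity) hdlow
      (by linarith)
      (by
        rw [hmcast, h4q]
        nlinarith [mul_nonneg hq0 (by linarith : (0:ℝ) ≤ (k:ℝ)-4)])
    have heq1 : (4*(n:ℝ)/(k:ℝ))^2 * ((n:ℝ) - 4*(n:ℝ)/(k:ℝ))^(k-3) / ((k:ℝ)-3)^(k-3)
        = 16 * ((n:ℝ)/(k:ℝ))^(k-1) * (((k:ℝ)-4)/((k:ℝ)-3))^(k-3) := by
      rw [hexp, pow_add]
      rw [show (n:ℝ) - 4*(n:ℝ)/(k:ℝ) = ((n:ℝ)/(k:ℝ)) * ((k:ℝ)-4) by field_simp]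
      rw [mul_pow, div_pow ((k:ℝ)-4)]
      field_simp
      ring
    have hexp2 : (((k:ℝ)-4)/((k:ℝ)-3))^(k-3) ≤ Real.exp (-1) := by
      have hbase : ((k:ℝ)-4)/((k:ℝ)-3) = 1 + (-(1/((k:ℝ)-3))) := by field_simp; ring
      have h1 : ((k:ℝ)-4)/((k:ℝ)-3) ≤ Real.exp (-(1/((k:ℝ)-3))) := by
        rw [hbase]
        have := Real.add_one_le_exp (-(1/((k:ℝ)-3)))
        linarith
      calc (((k:ℝ)-4)/((k:ℝ)-3))^(k-3) ≤ (Real.exp (-(1/((k:ℝ)-3))))^(k-3) := by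
            apply pow_le_pow_left₀ _ h1
            apply div_nonneg <;> linarith
        _ = Real.exp (((k-3:ℕ):ℝ) * (-(1/((k:ℝ)-3)))) := (Real.exp_nat_mul _ _).symm
        _ = Real.exp (-1) := by
            rw [hmcast]
            congr 1
            field_simp
    have hfinal : 16 * Real.exp (-1) ≤ 2 * (128 * Real.exp 1 / 81) := by
      have h2 : (2.7:ℝ) < Real.exp 1 := lt_trans (by norm_num) Real.exp_one_gt_d9
      rw [Real.exp_neg, inv_eq_one_div, mul_one_div,
        show (2:ℝ) * (128 * Real.exp 1 / 81) = (256 * Real.exp 1)/81 by ring,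
        div_le_div_iff₀ (Real.exp_pos 1) (by norm_num)]
      nlinarith
    calc d^2 * (((n:ℝ) - 1 - d) / ((k:ℝ) - 3))^(k-3)
        ≤ d^2 * (((n:ℝ) - d) / ((k:ℝ) - 3))^(k-3) := step1
      _ = d^2 * ((n:ℝ) - d)^(k-3) / ((k:ℝ)-3)^(k-3) := by rw [div_pow]; ring
      _ ≤ (4*(n:ℝ)/(k:ℝ))^2 * ((n:ℝ) - 4*(n:ℝ)/(k:ℝ))^(k-3) / ((k:ℝ)-3)^(k-3) :=
          div_le_div_of_nonneg_right hanti (by positivity)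
      _ = 16 * ((n:ℝ)/(k:ℝ))^(k-1) * (((k:ℝ)-4)/((k:ℝ)-3))^(k-3) := heq1
      _ ≤ 16 * (((n:ℝ)/(k:ℝ))^(k-1) * Real.exp (-1)) := by
          rw [mul_assoc]
          apply mul_le_mul_of_nonneg_left _ (by norm_num : (0:ℝ) ≤ 16)
          apply mul_le_mul_of_nonneg_left hexp2 hNKpow
      _ ≤ ((n:ℝ)/(k:ℝ))^(k-1) * (2 * (128 * Real.exp 1 / 81)) := by
          rw [show 16 * (((n:ℝ)/(k:ℝ))^(k-1) * Real.exp (-1))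
            = ((n:ℝ)/(k:ℝ))^(k-1) * (16 * Real.exp (-1)) by ring]
          apply mul_le_mul_of_nonneg_left hfinal hNKpow
      _ = 2 * (128 * Real.exp 1 / 81) * ((n:ℝ)/(k:ℝ))^(k-1) := by ring


/-- For `n ≥ k ≥ 4`, a graph `G` on `n` vertices and a vertex `u` with normalised degree
`c_u = k·d_u/n`, if `c_u ≤ 1` or `c_u ≥ 4` then `D_k(G,u) ≤ (128e/81)·(n/k)^(k-1)`. -/
theorem cycleCountAt_le_of_degree_extreme (n k : ℕ) (hk : 4 ≤ k) (hkn : k ≤ n)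
    (G : SimpleGraph (Fin n)) [DecidableRel G.Adj] (u : Fin n)
    (hc : (k : ℝ) * (G.degree u : ℝ) / (n : ℝ) ≤ 1 ∨
          4 ≤ (k : ℝ) * (G.degree u : ℝ) / (n : ℝ)) :
    (inducedCycleCountAt G k u : ℝ) ≤
      128 * Real.exp 1 / 81 * ((n : ℝ) / (k : ℝ)) ^ (k - 1) := by
  have hdeg : G.degree u < n := by
    have := G.degree_lt_card_verts u
    rwa [Fintype.card_fin] at this
  have hdn : (G.degree u : ℝ) ≤ (n:ℝ) - 1 := by
    have : (G.degree u : ℝ) + 1 ≤ (n:ℝ) := by exact_mod_cast hdeg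
    linarith
  have hcount := count_le n k hk G u
  have hcast1 : ((n - 1 - G.degree u : ℕ) : ℝ) = (n:ℝ) - 1 - (G.degree u : ℝ) := by
    have h1 : G.degree u ≤ n - 1 := by omega
    rw [Nat.cast_sub h1, Nat.cast_sub (by omega : 1 ≤ n)]
    push_cast
    ring
  have hcast2 : ((k - 3 : ℕ) : ℝ) = (k:ℝ) - 3 := by
    rw [Nat.cast_sub (by omega : 3 ≤ k)]
    push_cast
    ring
  rw [hcast1, hcast2] at hcount
  have hnum := num_final n k hk hkn (G.degree u : ℝ) (by positivity) hdn hc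
  linarith
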